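/- In the structure setting, let Ω' = {t ∈ [0,L] : τ(t) ≠ λ and τ(t) ≠ −λ} ∪ Ω. Then the set Ω' \ Ω is discrete (each of its points is isolated in Ω' \ Ω). -/

import Mathlib

open MeasureTheory Set Filter
open scoped RealInnerProductSpace ENNReal Topology NNReal

noncomputable section

abbrev E (n : ℕ) : Type := EuclideanSpace ℝ (Fin n)

/-- Orthogonal projection of `ℝⁿ` onto the orthogonal complement of `span {V, W}`. -/
def projPerp {n : ℕ} (V W x : E n) : E n :=
  (Submodule.orthogonalProjectionOnto ((Submodule.span ℝ {V, W})ᗮ) x : E n)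

/-- `τ ∈ W^{1,∞}((0,L); S^{n-1})`, represented by `τ` (Lipschitz on `[0,L]`)
together with its a.e. derivative `τ'`. -/
def IsW1InftySphere (n : ℕ) (L : ℝ) (τ τ' : ℝ → E n) : Prop :=
  (∃ C : ℝ≥0, LipschitzOnWith C τ (Icc 0 L)) ∧
  (∀ᵐ t ∂(volume.restrict (Ioo (0:ℝ) L)), HasDerivAt τ (τ' t) t) ∧
  (∀ t ∈ Icc (0:ℝ) L, ‖τ t‖ = 1)

/-- `f ∈ W^{1,∞}(0,L)`, represented by `f` (Lipschitz on `[0,L]`) together with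
its a.e. derivative `f'`. -/
def IsW1InftyR (L : ℝ) (f f' : ℝ → ℝ) : Prop :=
  (∃ C : ℝ≥0, LipschitzOnWith C f (Icc 0 L)) ∧
  (∀ᵐ t ∂(volume.restrict (Ioo (0:ℝ) L)), HasDerivAt f (f' t) t)

/-- `K_∞(τ) = esssup_{(0,L)} |τ'|`. -/
def Kinf (n : ℕ) (L : ℝ) (τ' : ℝ → E n) : ℝ :=
  essSup (fun t => ‖τ' t‖) (volume.restrict (Ioo (0:ℝ) L))

/-- The equation `f(τ'' + k²τ) = β k² proj⊥_{τ,τ'}(λ)` holds weakly in `(0,L)`. -/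
def WeakFEq1 (n : ℕ) (L k : ℝ) (β : ℝ → ℝ) (lam : E n)
    (τ τ' : ℝ → E n) (f f' : ℝ → ℝ) : Prop :=
  ∀ ξ : ℝ → E n, ContDiff ℝ (⊤ : ℕ∞) ξ → tsupport ξ ⊆ Ioo 0 L →
    ∫ t in Ioo (0:ℝ) L,
      (f t * ⟪τ' t, deriv ξ t⟫ + f' t * ⟪τ' t, ξ t⟫
        - f t * k ^ 2 * ⟪τ t, ξ t⟫
        + β t * k ^ 2 * ⟪projPerp (τ t) (τ' t) lam, ξ t⟫) = 0

/-- The equation `f' = β λ·τ'` holds weakly in `(0,L)`. -/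
def WeakFEq2 (n : ℕ) (L : ℝ) (β : ℝ → ℝ) (lam : E n)
    (τ' : ℝ → E n) (f' : ℝ → ℝ) : Prop :=
  ∀ᵐ t ∂(volume.restrict (Ioo (0:ℝ) L)), f' t = β t * ⟪lam, τ' t⟫

/- ### Auxiliary lemmas -/

lemma projPerp_eq {n : ℕ} {V W x : E n} (hV : ‖V‖ = 1) (hVW : ⟪V, W⟫ = 0)
    (hxW : ⟪x, W⟫ = 0) : projPerp V W x = x - ⟪x, V⟫ • V := by
  have hVmem : V ∈ Submodule.span ℝ ({V, W} : Set (E n)) :=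
    Submodule.subset_span (by simp)
  apply Submodule.eq_starProjection_of_mem_of_inner_eq_zero
  · rw [Submodule.mem_orthogonal]
    intro u hu
    rcases Submodule.mem_span_pair.mp hu with ⟨a, b, rfl⟩
    have hVV : ⟪V, V⟫ = (1:ℝ) := by rw [real_inner_self_eq_norm_sq, hV]; norm_num
    simp only [inner_add_left, inner_smul_left, inner_sub_right, inner_smul_right,
      RCLike.conj_to_real]
    have h1 : ⟪W, x⟫ = 0 := by rw [real_inner_comm]; exact hxW
    have h2 : ⟪W, V⟫ = 0 := by rw [real_inner_comm]; exact hVW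
    rw [hVV, h1, h2, real_inner_comm x V]
    ring
  · intro w hw
    have : x - (x - ⟪x, V⟫ • V) = ⟪x, V⟫ • V := by abel
    rw [this]
    have hVw : ⟪V, w⟫ = 0 := (Submodule.mem_orthogonal _ _).mp hw V hVmem
    rw [inner_smul_left, RCLike.conj_to_real, hVw, mul_zero]

lemma dep_decomp {n : ℕ} {V W lam : E n} {k : ℝ} (hV : ‖V‖ = 1) (hlam : ‖lam‖ = 1)
    (hVW : ⟪V, W⟫ = 0) (hW : ‖W‖ = k) (hk : 0 < k)
    (hdep : ¬ LinearIndependent ℝ ![V, W, lam]) :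
    ⟪lam, W⟫ ^ 2 = k ^ 2 * (1 - ⟪lam, V⟫ ^ 2) := by
  rw [Fintype.not_linearIndependent_iff] at hdep
  obtain ⟨g, hsum, i, hi⟩ := hdep
  rw [Fin.sum_univ_three] at hsum
  simp only [Matrix.cons_val_zero, Matrix.cons_val_one, Matrix.head_cons,
    Matrix.cons_val_two, Matrix.tail_cons] at hsum
  have hVV : ⟪V, V⟫ = (1:ℝ) := by rw [real_inner_self_eq_norm_sq, hV]; norm_num
  have hWW : ⟪W, W⟫ = k ^ 2 := by rw [real_inner_self_eq_norm_sq, hW]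
  have hWV : ⟪W, V⟫ = 0 := by rw [real_inner_comm]; exact hVW
  by_cases hg2 : g 2 = 0
  · exfalso
    rw [hg2, zero_smul, add_zero] at hsum
    have h0 : g 0 = 0 := by
      have := congrArg (fun z => ⟪z, V⟫) hsum
      simpa [inner_add_left, inner_smul_left, hVV, hWV, hV] using this
    have h1 : g 1 = 0 := by
      have := congrArg (fun z => ⟪z, W⟫) hsum
      have h' : g 1 * k ^ 2 = 0 := by
        simpa [inner_add_left, inner_smul_left, hVW, hWW, hW] using this
      rcases mul_eq_zero.mp h' with h | h
      · exact h
      · exact absurd h (by positivity)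
    fin_cases i <;> simp_all
  · have hlamdef : lam = (-(g 0) / g 2) • V + (-(g 1) / g 2) • W := by
      have h2 : g 2 • lam = -(g 0 • V) - g 1 • W := by
        linear_combination (norm := module) hsum
      have := congrArg (fun z => (g 2)⁻¹ • z) h2
      simp only [smul_sub, smul_neg, smul_smul, inv_mul_cancel₀ hg2, one_smul] at this
      rw [this]
      rw [neg_div, neg_div, neg_smul, neg_smul]
      rw [div_eq_inv_mul, div_eq_inv_mul]
      module
    set p := -(g 0) / g 2
    set q := -(g 1) / g 2
    have hlV : ⟪lam, V⟫ = p := by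
      rw [hlamdef]; simp [inner_add_left, inner_smul_left, hVV, hWV, hV]
    have hlW : ⟪lam, W⟫ = q * k ^ 2 := by
      rw [hlamdef]; simp [inner_add_left, inner_smul_left, hVW, hWW, hW]
    have hnorm : p ^ 2 + q ^ 2 * k ^ 2 = 1 := by
      have : ⟪lam, lam⟫ = (1:ℝ) := by rw [real_inner_self_eq_norm_sq, hlam]; norm_num
      rw [hlamdef] at this
      simp only [inner_add_left, inner_add_right, inner_smul_left, inner_smul_right,
        RCLike.conj_to_real, hVV, hWW, hVW, hWV] at this
      linarith [this]
    rw [hlV, hlW]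
    have : k ^ 2 > 0 := by positivity
    nlinarith [hnorm]

lemma right_local_mono {a b : ℝ} (hab : a ≤ b) {g : ℝ → ℝ}
    (hc : ContinuousOn g (Icc a b))
    (hloc : ∀ t ∈ Ico a b, ∃ ε > 0, ∀ s, t < s → s ≤ t + ε → s ≤ b → g t ≤ g s) :
    g a ≤ g b := by
  set Eg : Set ℝ := Icc a b ∩ g ⁻¹' (Ici (g a)) with hE
  have hne : Eg.Nonempty := ⟨a, ⟨le_refl _, hab⟩, by simp⟩
  have hbdd : BddAbove Eg := ⟨b, fun t ht => ht.1.2⟩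
  have hclosed : IsClosed Eg := hc.preimage_isClosed_of_isClosed isClosed_Icc isClosed_Ici
  have hT : sSup Eg ∈ Eg := hclosed.csSup_mem hne hbdd
  set T := sSup Eg with hTdef
  rcases eq_or_lt_of_le hT.1.2 with h | h
  · have := hT.2
    rw [h] at this
    exact this
  · exfalso
    obtain ⟨ε, hε, hprop⟩ := hloc T ⟨hT.1.1, h⟩
    set s := min b (T + ε) with hs
    have hTs : T < s := lt_min h (by linarith)
    have hgs : g T ≤ g s := hprop s hTs (min_le_right _ _) (min_le_left _ _)
    have hsE : s ∈ Eg := ⟨⟨le_trans hT.1.1 hTs.le, min_le_left _ _⟩, le_trans hT.2 hgs⟩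
    exact absurd (le_csSup hbdd hsE) (not_le.mpr hTs)

/-- FTC-type lower bound for a Lipschitz function with an a.e. derivative bounded below. -/
lemma lipschitz_ae_deriv_lb {a b c : ℝ} {C : ℝ≥0} {f f' : ℝ → ℝ}
    (hab : a < b) (hc : 0 < c)
    (hLip : LipschitzOnWith C f (Icc a b))
    (hae : ∀ᵐ t ∂(volume.restrict (Ioo a b)), HasDerivAt f (f' t) t ∧ c ≤ f' t) :
    f a + c / 2 * (b - a) ≤ f b := by
  set P : ℝ → Prop := fun t => HasDerivAt f (f' t) t ∧ c ≤ f' t with hP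
  have hNnull : volume ({t | ¬ P t} ∩ Ioo a b) = 0 := by
    have := hae
    rw [ae_iff] at this
    rwa [Measure.restrict_apply' measurableSet_Ioo] at this
  set N : Set ℝ := ({t | ¬ P t} ∩ Ioo a b) ∪ {a, b} with hNdef
  have hNnull' : volume N = 0 := by
    apply measure_union_null hNnull
    exact (Set.toFinite ({a, b} : Set ℝ)).measure_zero volume
  set K : ℝ := (C : ℝ) + 1 + c with hK
  have hKpos : 0 < K := by positivity
  have key : ∀ ε : ℝ, 0 < ε → f a + c / 2 * (b - a) ≤ f b + K * ε := by
    intro ε hε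
    obtain ⟨U, hNU, hUopen, hUvol⟩ :=
      Set.exists_isOpen_lt_of_lt N (ENNReal.ofReal ε)
        (by rw [hNnull']; exact ENNReal.ofReal_pos.mpr hε)
    set mU : ℝ → ℝ := fun t => (volume (U ∩ Ioc a t)).toReal with hmU
    have hUfin : ∀ s : Set ℝ, volume (U ∩ s) < ⊤ := fun s =>
      lt_of_le_of_lt (le_trans (measure_mono inter_subset_left) hUvol.le) ENNReal.ofReal_lt_top
    have hmU_mono : ∀ t₁ t₂, t₁ ≤ t₂ → mU t₁ ≤ mU t₂ := by
      intro t₁ t₂ h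
      apply ENNReal.toReal_mono (hUfin _).ne
      exact measure_mono (inter_subset_inter_right _ (Ioc_subset_Ioc_right h))
    have hmU_lip : ∀ t₁ t₂, t₁ ≤ t₂ → mU t₂ - mU t₁ ≤ t₂ - t₁ := by
      intro t₁ t₂ h
      have hsub : U ∩ Ioc a t₂ ⊆ (U ∩ Ioc a t₁) ∪ Ioc t₁ t₂ := by
        intro x ⟨hxU, hx⟩
        by_cases hx1 : x ≤ t₁
        · exact Or.inl ⟨hxU, hx.1, hx1⟩
        · exact Or.inr ⟨not_le.mp hx1, hx.2⟩
      have hle := le_trans (measure_mono hsub)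
        (measure_union_le (μ := volume) (U ∩ Ioc a t₁) (Ioc t₁ t₂))
      rw [Real.volume_Ioc] at hle
      have := ENNReal.toReal_mono
        ((ENNReal.add_lt_top.mpr ⟨hUfin _, ENNReal.ofReal_lt_top⟩).ne) hle
      rw [ENNReal.toReal_add (hUfin _).ne ENNReal.ofReal_lt_top.ne,
        ENNReal.toReal_ofReal (by linarith)] at this
      linarith [this]
    have hmU_inc : ∀ t₁ t₂, a ≤ t₁ → t₁ ≤ t₂ → Ioc t₁ t₂ ⊆ U → t₂ - t₁ ≤ mU t₂ - mU t₁ := by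
      intro t₁ t₂ ha h hsub
      have hdisj : Disjoint (U ∩ Ioc a t₁) (Ioc t₁ t₂) := by
        apply Set.disjoint_left.mpr
        rintro x ⟨-, -, hx1⟩ ⟨hx2, -⟩
        exact absurd hx1 (not_le.mpr hx2)
      have hsub2 : (U ∩ Ioc a t₁) ∪ Ioc t₁ t₂ ⊆ U ∩ Ioc a t₂ := by
        rintro x (⟨hxU, hx⟩ | hx)
        · exact ⟨hxU, hx.1, le_trans hx.2 h⟩
        · exact ⟨hsub hx, lt_of_le_of_lt ha hx.1, hx.2⟩
      have hun : volume ((U ∩ Ioc a t₁) ∪ Ioc t₁ t₂)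
          = volume (U ∩ Ioc a t₁) + volume (Ioc t₁ t₂) :=
        measure_union hdisj measurableSet_Ioc
      have hle := measure_mono (μ := volume) hsub2
      rw [hun, Real.volume_Ioc] at hle
      have := ENNReal.toReal_mono (hUfin _).ne hle
      rw [ENNReal.toReal_add (hUfin _).ne ENNReal.ofReal_lt_top.ne,
        ENNReal.toReal_ofReal (by linarith)] at this
      linarith [this]
    have hmU_cont : Continuous mU := by
      have : LipschitzWith 1 mU := by
        apply LipschitzWith.of_dist_le_mul
        intro x y
        rw [Real.dist_eq, Real.dist_eq, NNReal.coe_one, one_mul]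
        rcases le_total x y with h | h
        · rw [abs_of_nonpos (by linarith [hmU_mono x y h]), abs_of_nonpos (by linarith)]
          linarith [hmU_lip x y h]
        · rw [abs_of_nonneg (by linarith [hmU_mono y x h]), abs_of_nonneg (by linarith)]
          linarith [hmU_lip y x h]
      exact this.continuous
    set g : ℝ → ℝ := fun t => f t + K * mU t - c / 2 * (t - a) with hg
    have hgcont : ContinuousOn g (Icc a b) := by
      apply ContinuousOn.sub
      · exact hLip.continuousOn.add (hmU_cont.continuousOn.const_smul K)
      · exact (continuous_const.mul (continuous_id.sub continuous_const)).continuousOn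
    have hflip : ∀ x ∈ Icc a b, ∀ y ∈ Icc a b, |f x - f y| ≤ (C:ℝ) * |x - y| := by
      intro x hx y hy
      have := hLip.dist_le_mul x hx y hy
      rwa [Real.dist_eq, Real.dist_eq] at this
    have hgmono : g a ≤ g b := by
      apply right_local_mono hab.le hgcont
      intro t ht
      by_cases htU : t ∈ U
      · obtain ⟨r, hr, hball⟩ := Metric.isOpen_iff.mp hUopen t htU
        refine ⟨r / 2, by linarith, fun s hts hsr hsb => ?_⟩
        have hIocU : Ioc t s ⊆ U := by
          intro x hx
          apply hball
          rw [Metric.mem_ball, Real.dist_eq, abs_of_pos (by linarith [hx.1])]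
          linarith [hx.2]
        have hinc := hmU_inc t s ht.1 hts.le hIocU
        have hfb := hflip s ⟨by linarith [ht.1], hsb⟩ t ⟨ht.1, ht.2.le⟩
        rw [abs_of_pos (show (0:ℝ) < s - t by linarith)] at hfb
        have hflow : f s - f t ≥ -((C:ℝ) * (s - t)) := by
          have := neg_abs_le (f s - f t)
          linarith
        have hKmu : K * mU s - K * mU t ≥ K * (s - t) := by
          nlinarith [hinc, hKpos]
        have hgd : g s - g t ≥ 0 := by
          simp only [hg]
          nlinarith [hflow, hKmu]
        linarith [hgd]
      · have htN : t ∉ N := fun h => htU (hNU h)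
        have hta : t ≠ a := by
          intro h; apply htN; right; simp [h]
        have htb : t ≠ b := fun h => htN (Or.inr (by simp [h]))
        have htIoo : t ∈ Ioo a b := ⟨lt_of_le_of_ne ht.1 (Ne.symm hta), ht.2⟩
        have hPt : P t := by
          by_contra hcon
          exact htN (Or.inl ⟨hcon, htIoo⟩)
        obtain ⟨hder, hflb⟩ := hPt
        have hslope : Tendsto (slope f t) (𝓝[>] t) (𝓝 (f' t)) := by
          have := hasDerivAt_iff_tendsto_slope.mp hder
          exact this.mono_left (nhdsWithin_mono t (by intro x hx; exact ne_of_gt hx))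
        have hev : ∀ᶠ s in 𝓝[>] t, c / 2 < slope f t s := by
          apply hslope.eventually_const_lt
          linarith
        obtain ⟨u, hu, husub⟩ := mem_nhdsGT_iff_exists_Ioo_subset.mp hev
        refine ⟨(u - t) / 2, by simp at hu; linarith [hu], fun s hts hsu hsb => ?_⟩
        have hsIoo : s ∈ Ioo t u := ⟨hts, by simp at hu; linarith⟩
        have hsl := husub hsIoo
        rw [Set.mem_setOf_eq, slope_def_field] at hsl
        have hfs : f s - f t ≥ c / 2 * (s - t) := by
          have hst : (0:ℝ) < s - t := by linarith
          have := (lt_div_iff₀ hst).mp hsl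
          linarith
        have hmu := hmU_mono t s hts.le
        simp only [hg]
        nlinarith [hfs, hmu, hKpos]
    have hmUa : mU a = 0 := by
      simp only [hmU, Ioc_self, inter_empty, measure_empty, ENNReal.toReal_zero]
    have hmUb : mU b ≤ ε := by
      have h1 : volume (U ∩ Ioc a b) ≤ ENNReal.ofReal ε :=
        le_trans (measure_mono inter_subset_left) hUvol.le
      have := ENNReal.toReal_mono ENNReal.ofReal_lt_top.ne h1
      rwa [ENNReal.toReal_ofReal hε.le] at this
    simp only [hg] at hgmono
    rw [hmUa] at hgmono
    nlinarith [hgmono, hmUb, hKpos]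
  apply le_of_forall_pos_le_add
  intro ε' hε'
  have := key (ε' / K) (by positivity)
  calc f a + c / 2 * (b - a) ≤ f b + K * (ε' / K) := this
    _ = f b + ε' := by field_simp

set_option maxHeartbeats 2000000 in
theorem exceptional_set_discrete
    (n : ℕ) (hn : 2 ≤ n) (L : ℝ) (hL : 0 < L)
    (β : ℝ → ℝ) (hβpos : ∀ t ∈ Icc (0:ℝ) L, 0 < β t)
    (hβBV : BoundedVariationOn β (Icc 0 L))
    (hβinv : ∃ c : ℝ, 0 < c ∧ ∀ t ∈ Icc (0:ℝ) L, c ≤ β t)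
    (τ τ' : ℝ → E n) (hτ : IsW1InftySphere n L τ τ')
    (k : ℝ) (hk : k = Kinf n L τ') (hkpos : 0 < k)
    (lam : E n) (hlam : ‖lam‖ = 1)
    (f f' : ℝ → ℝ) (hf : IsW1InftyR L f f')
    (hf0 : ¬ ∀ t ∈ Icc (0:ℝ) L, f t = 0)
    (hfnn : ∀ t ∈ Icc (0:ℝ) L, 0 ≤ f t)
    (heq1 : WeakFEq1 n L k β lam τ τ' f f')
    (heq2 : WeakFEq2 n L β lam τ' f')
    (Ω : Set ℝ) (hΩ : Ω = {t ∈ Icc (0:ℝ) L | 0 < f t})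
    (hτd : ∀ t ∈ Ω, HasDerivWithinAt τ (τ' t) (Icc 0 L) t)
    (hτ'cont : ContinuousOn τ' Ω)
    (hτ'k : ∀ t ∈ Ω, ‖τ' t‖ = k)
    (hdep : ∀ t ∈ Ω, ¬ LinearIndependent ℝ ![τ t, τ' t, lam])
    (Ω' : Set ℝ)
    (hΩ' : Ω' = {t ∈ Icc (0:ℝ) L | τ t ≠ lam ∧ τ t ≠ -lam} ∪ Ω) :
    ∀ t ∈ Ω' \ Ω, ∃ ε : ℝ, 0 < ε ∧
      ∀ s ∈ Ω' \ Ω, |s - t| < ε → s = t := by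
  obtain ⟨Cτ, hτLip⟩ := hτ.1
  have hτae := hτ.2.1
  have hτnorm := hτ.2.2
  obtain ⟨Cf, hfLip⟩ := hf.1
  have hfae := hf.2
  obtain ⟨cβ, hcβ, hβlb⟩ := hβinv
  have hfc : ContinuousOn f (Icc 0 L) := hfLip.continuousOn
  have hτc : ContinuousOn τ (Icc 0 L) := hτLip.continuousOn
  have hzero : ∀ t, t ∈ Icc (0:ℝ) L → t ∉ Ω → f t = 0 := by
    intro t htI htΩ
    rw [hΩ] at htΩ
    simp only [Set.mem_setOf_eq, Set.mem_sep_iff] at htΩ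
    have : ¬ 0 < f t := fun h => htΩ ⟨htI, h⟩
    linarith [hfnn t htI]
  have hΩIcc : Ω ⊆ Icc 0 L := by
    rw [hΩ]; exact fun t ht => ht.1
  -- orthogonality on Ω
  have hOrth : ∀ t ∈ Ω, ⟪τ t, τ' t⟫ = 0 := by
    intro t ht
    have htI : t ∈ Icc (0:ℝ) L := hΩIcc ht
    have h1 : HasDerivWithinAt (fun s => ⟪τ s, τ s⟫) (⟪τ t, τ' t⟫ + ⟪τ' t, τ t⟫)
        (Icc 0 L) t := (hτd t ht).inner ℝ (hτd t ht)
    have h2 : HasDerivWithinAt (fun s => ⟪τ s, τ s⟫) 0 (Icc 0 L) t := by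
      apply (hasDerivWithinAt_const t (Icc (0:ℝ) L) (1:ℝ)).congr
      · intro s hs
        rw [real_inner_self_eq_norm_sq, hτnorm s hs, one_pow]
      · rw [real_inner_self_eq_norm_sq, hτnorm t htI, one_pow]
    have hu : UniqueDiffWithinAt ℝ (Icc (0:ℝ) L) t := uniqueDiffOn_Icc hL t htI
    have h3 := (h1.derivWithin hu).symm.trans (h2.derivWithin hu)
    rw [real_inner_comm (τ' t) (τ t)] at h3
    rw [real_inner_comm]
    linarith [h3]
  have hUsq : ∀ t ∈ Ω, ⟪lam, τ' t⟫ ^ 2 = k ^ 2 * (1 - ⟪lam, τ t⟫ ^ 2) := by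
    intro t ht
    exact dep_decomp (hτnorm t (hΩIcc ht)) hlam (hOrth t ht) (hτ'k t ht) hkpos (hdep t ht)
  -- start
  intro t0 ht0
  have ht0' : t0 ∉ Ω := ht0.2
  have ht0'' : t0 ∈ Icc (0:ℝ) L ∧ τ t0 ≠ lam ∧ τ t0 ≠ -lam := by
    have := ht0.1
    rw [hΩ'] at this
    rcases this with h | h
    · exact ⟨h.1, h.2.1, h.2.2⟩
    · exact absurd h ht0'
  obtain ⟨ht0I, hne1, hne2⟩ := ht0''
  have hft00 : f t0 = 0 := hzero t0 ht0I ht0'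
  -- |⟪lam, τ t0⟫| < 1
  have habs0 : |⟪lam, τ t0⟫| < 1 := by
    rw [abs_lt]
    constructor
    · have h : ⟪lam, -τ t0⟫ < 1 := by
        rw [inner_lt_one_iff_real_of_norm_eq_one hlam (by rw [norm_neg]; exact hτnorm t0 ht0I)]
        intro h
        exact hne2 (by rw [h]; simp)
      rw [inner_neg_right] at h
      linarith
    · rw [inner_lt_one_iff_real_of_norm_eq_one hlam (hτnorm t0 ht0I)]
      intro h
      exact hne1 h.symm
  set δ : ℝ := (1 - |⟪lam, τ t0⟫|) / 2 with hδdef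
  have hδpos : 0 < δ := by simp only [hδdef]; linarith
  have hδhalf : δ ≤ 1 / 2 := by
    simp only [hδdef]
    have := abs_nonneg (⟪lam, τ t0⟫)
    linarith
  set mδ : ℝ := δ * (2 - δ) with hmδdef
  have hmδpos : 0 < mδ := by
    simp only [hmδdef]; nlinarith
  have hmδeq : mδ = 1 - (1 - δ) ^ 2 := by simp only [hmδdef]; ring
  -- continuity: choose ε0
  have hacont : ContinuousOn (fun t => ⟪lam, τ t⟫) (Icc 0 L) :=
    continuousOn_const.inner hτc
  obtain ⟨ε0, hε0, hε0p⟩ : ∃ ε0 > 0, ∀ t ∈ Icc (0:ℝ) L, |t - t0| < ε0 →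
      |⟪lam, τ t⟫| ≤ 1 - δ := by
    have hcw : ContinuousWithinAt (fun t => ⟪lam, τ t⟫) (Icc 0 L) t0 := hacont t0 ht0I
    rw [Metric.continuousWithinAt_iff] at hcw
    obtain ⟨ε0, hε0, hcw⟩ := hcw δ hδpos
    refine ⟨ε0, hε0, fun t ht hdist => ?_⟩
    have := hcw ht (by rwa [Real.dist_eq])
    rw [Real.dist_eq] at this
    have h1 : |⟪lam, τ t⟫| ≤ |⟪lam, τ t0⟫| + |⟪lam, τ t⟫ - ⟪lam, τ t0⟫| := by
      have := abs_sub_abs_le_abs_sub (⟪lam, τ t⟫) (⟪lam, τ t0⟫)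
      linarith
    have h2 : |⟪lam, τ t0⟫| = 1 - 2 * δ := by simp only [hδdef]; ring
    linarith
  refine ⟨ε0, hε0, fun s hs hdist => ?_⟩
  by_contra hne
  -- s is also a zero of f
  have hs' : s ∉ Ω := hs.2
  have hsI : s ∈ Icc (0:ℝ) L := by
    have := hs.1
    rw [hΩ'] at this
    rcases this with h | h
    · exact h.1
    · exact absurd h hs'
  have hfs0 : f s = 0 := hzero s hsI hs'
  -- the core argument
  have core : ∀ p q : ℝ, p ∈ Icc (0:ℝ) L → q ∈ Icc (0:ℝ) L → p < q →
      f p = 0 → f q = 0 → (∀ t ∈ Icc p q, |⟪lam, τ t⟫| ≤ 1 - δ) → False := by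
    intro p q hpI hqI hpq hfp hfq hbound
    have hIccsub : Icc p q ⊆ Icc (0:ℝ) L := Icc_subset_Icc hpI.1 hqI.2
    have hIoosub : Ioo p q ⊆ Ioo (0:ℝ) L := fun t ht =>
      ⟨lt_of_le_of_lt hpI.1 ht.1, lt_of_lt_of_le ht.2 hqI.2⟩
    by_cases hmeet : ∃ x ∈ Ioo p q, x ∈ Ω
    · -- Case B
      obtain ⟨x, hxIoo, hxΩ⟩ := hmeet
      have hfx : 0 < f x := by rw [hΩ] at hxΩ; exact hxΩ.2
      have hxI : x ∈ Icc (0:ℝ) L := hΩIcc hxΩ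
      set A : Set ℝ := Icc p x ∩ f ⁻¹' {0} with hA
      have hAne : A.Nonempty := ⟨p, ⟨le_refl _, hxIoo.1.le⟩, hfp⟩
      have hAbdd : BddAbove A := ⟨x, fun t ht => ht.1.2⟩
      have hAclosed : IsClosed A :=
        (hfc.mono (Icc_subset_Icc hpI.1 hxI.2)).preimage_isClosed_of_isClosed
          isClosed_Icc isClosed_singleton
      set α : ℝ := sSup A with hαdef
      have hαA : α ∈ A := hAclosed.csSup_mem hAne hAbdd
      have hfα : f α = 0 := hαA.2
      have hαx : α < x := lt_of_le_of_ne hαA.1.2 (fun h => by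
        rw [h] at hfα; linarith)
      have hpα : p ≤ α := hαA.1.1
      set B : Set ℝ := Icc x q ∩ f ⁻¹' {0} with hB
      have hBne : B.Nonempty := ⟨q, ⟨hxIoo.2.le, le_refl _⟩, hfq⟩
      have hBbdd : BddBelow B := ⟨x, fun t ht => ht.1.1⟩
      have hBclosed : IsClosed B :=
        (hfc.mono (Icc_subset_Icc hxI.1 hqI.2)).preimage_isClosed_of_isClosed
          isClosed_Icc isClosed_singleton
      set γ : ℝ := sInf B with hγdef
      have hγB : γ ∈ B := hBclosed.csInf_mem hBne hBbdd
      have hfγ : f γ = 0 := hγB.2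
      have hxγ : x < γ := by
        rcases lt_or_eq_of_le hγB.1.1 with h | h
        · exact h
        · exfalso; rw [← h] at hfγ; linarith
      have hγq : γ ≤ q := hγB.1.2
      have hαγ : α < γ := lt_trans hαx hxγ
      have hαγIcc : Icc α γ ⊆ Icc (0:ℝ) L :=
        Icc_subset_Icc (le_trans hpI.1 hpα) (le_trans hγq hqI.2)
      have hsubΩ : Ioo α γ ⊆ Ω := by
        intro t ht
        have htpq : t ∈ Icc p q := ⟨le_trans hpα ht.1.le, le_trans ht.2.le hγq⟩
        have htI : t ∈ Icc (0:ℝ) L := hIccsub htpq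
        rw [hΩ]
        refine ⟨htI, ?_⟩
        by_contra hpos
        have hft : f t = 0 := le_antisymm (not_lt.mp hpos) (hfnn t htI)
        rcases le_or_gt t x with hle | hlt
        · have htA : t ∈ A := ⟨⟨le_trans hpα ht.1.le, hle⟩, hft⟩
          exact absurd (le_csSup hAbdd htA) (not_le.mpr ht.1)
        · have htB : t ∈ B := ⟨⟨hlt.le, le_trans ht.2.le hγq⟩, hft⟩
          exact absurd (csInf_le hBbdd htB) (not_le.mpr ht.2)
      set m : ℝ := k ^ 2 * mδ with hmdef
      have hmpos : 0 < m := by positivity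
      have hUlb : ∀ t ∈ Ioo α γ, m ≤ ⟪lam, τ' t⟫ ^ 2 := by
        intro t ht
        have htΩ : t ∈ Ω := hsubΩ ht
        have htpq : t ∈ Icc p q := ⟨le_trans hpα ht.1.le, le_trans ht.2.le hγq⟩
        have habs := hbound t htpq
        have hsq : ⟪lam, τ t⟫ ^ 2 ≤ (1 - δ) ^ 2 :=
          sq_le_sq' (abs_le.mp habs).1 (abs_le.mp habs).2
        have heq := hUsq t htΩ
        rw [heq, hmdef, hmδeq]
        exact mul_le_mul_of_nonneg_left (by linarith [hsq]) (sq_nonneg k)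
      have hune : ∀ t ∈ Ioo α γ, ⟪lam, τ' t⟫ ≠ 0 := by
        intro t ht h0
        have := hUlb t ht
        rw [h0] at this
        nlinarith
      have hucont : ContinuousOn (fun t => ⟪lam, τ' t⟫) (Ioo α γ) :=
        continuousOn_const.inner (hτ'cont.mono hsubΩ)
      have hivt : ∀ t1 t2, t1 ∈ Ioo α γ → t2 ∈ Ioo α γ → t1 < t2 →
          ⟪lam, τ' t1⟫ < 0 → 0 < ⟪lam, τ' t2⟫ → False := by
        intro t1 t2 ht1 ht2 h12 hneg hpos2
        have hsub12 : Icc t1 t2 ⊆ Ioo α γ := fun z hz =>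
          ⟨lt_of_lt_of_le ht1.1 hz.1, lt_of_le_of_lt hz.2 ht2.2⟩
        have hiv := intermediate_value_Icc h12.le (hucont.mono hsub12)
        have h0mem : (0:ℝ) ∈ Icc (⟪lam, τ' t1⟫) (⟪lam, τ' t2⟫) := ⟨hneg.le, hpos2.le⟩
        obtain ⟨z, hz, hz0⟩ := hiv h0mem
        exact hune z (hsub12 hz) hz0
      have hivt' : ∀ t1 t2, t1 ∈ Ioo α γ → t2 ∈ Ioo α γ → t2 < t1 →
          ⟪lam, τ' t1⟫ < 0 → 0 < ⟪lam, τ' t2⟫ → False := by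
        intro t1 t2 ht1 ht2 h21 hneg hpos2
        have hsub12 : Icc t2 t1 ⊆ Ioo α γ := fun z hz =>
          ⟨lt_of_lt_of_le ht2.1 hz.1, lt_of_le_of_lt hz.2 ht1.2⟩
        have hiv := intermediate_value_Icc' h21.le (hucont.mono hsub12)
        have h0mem : (0:ℝ) ∈ Icc (⟪lam, τ' t1⟫) (⟪lam, τ' t2⟫) := ⟨hneg.le, hpos2.le⟩
        obtain ⟨z, hz, hz0⟩ := hiv h0mem
        exact hune z (hsub12 hz) hz0
      have hsign : (∀ t ∈ Ioo α γ, 0 < ⟪lam, τ' t⟫) ∨ (∀ t ∈ Ioo α γ, ⟪lam, τ' t⟫ < 0) := by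
        by_cases hpos : ∀ t ∈ Ioo α γ, 0 < ⟪lam, τ' t⟫
        · exact Or.inl hpos
        · push_neg at hpos
          obtain ⟨t1, ht1, ht1le⟩ := hpos
          have ht1neg : ⟪lam, τ' t1⟫ < 0 := lt_of_le_of_ne ht1le (hune t1 ht1)
          refine Or.inr fun t2 ht2 => ?_
          by_contra hc
          have ht2pos : 0 < ⟪lam, τ' t2⟫ :=
            lt_of_le_of_ne (not_lt.mp hc) (Ne.symm (hune t2 ht2))
          rcases lt_trichotomy t1 t2 with h12 | h12 | h12
          · exact hivt t1 t2 ht1 ht2 h12 ht1neg ht2pos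
          · rw [h12] at ht1neg; linarith
          · exact hivt' t1 t2 ht1 ht2 h12 ht1neg ht2pos
      set c : ℝ := cβ * Real.sqrt m with hcdef
      have hsqrtm : 0 < Real.sqrt m := Real.sqrt_pos.mpr hmpos
      have hcpos : 0 < c := by positivity
      have hIoosub2 : Ioo α γ ⊆ Ioo (0:ℝ) L := fun t ht =>
        hIoosub ⟨lt_of_le_of_lt hpα ht.1, lt_of_lt_of_le ht.2 hγq⟩
      have hfae' := ae_restrict_of_ae_restrict_of_subset hIoosub2 hfae
      have heq2' := ae_restrict_of_ae_restrict_of_subset hIoosub2 heq2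
      rcases hsign with hsgn | hsgn
      · have hae : ∀ᵐ t ∂(volume.restrict (Ioo α γ)),
            HasDerivAt f (f' t) t ∧ c ≤ f' t := by
          filter_upwards [hfae', heq2', ae_restrict_mem measurableSet_Ioo]
            with t hder hq2 htm
          refine ⟨hder, ?_⟩
          have hu := hsgn t htm
          have husq := hUlb t htm
          have hule : Real.sqrt m ≤ ⟪lam, τ' t⟫ := by
            have h1 := Real.sqrt_le_sqrt husq
            rw [Real.sqrt_sq_eq_abs, abs_of_pos hu] at h1
            exact h1
          have htI : t ∈ Icc (0:ℝ) L := hΩIcc (hsubΩ htm)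
          have hβt := hβlb t htI
          rw [hq2, hcdef]
          exact mul_le_mul hβt hule hsqrtm.le (le_trans hcβ.le hβt)
        have hlb := lipschitz_ae_deriv_lb hαγ hcpos (hfLip.mono hαγIcc) hae
        rw [hfα, hfγ] at hlb
        nlinarith [hlb, hαγ, hcpos]
      · have hae : ∀ᵐ t ∂(volume.restrict (Ioo α γ)),
            HasDerivAt (fun s => -f s) (-f' t) t ∧ c ≤ -f' t := by
          filter_upwards [hfae', heq2', ae_restrict_mem measurableSet_Ioo]
            with t hder hq2 htm
          refine ⟨hder.neg, ?_⟩
          have hu := hsgn t htm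
          have husq := hUlb t htm
          have hule : Real.sqrt m ≤ -⟪lam, τ' t⟫ := by
            have h1 := Real.sqrt_le_sqrt husq
            rw [Real.sqrt_sq_eq_abs, abs_of_neg hu] at h1
            exact h1
          have htI : t ∈ Icc (0:ℝ) L := hΩIcc (hsubΩ htm)
          have hβt := hβlb t htI
          rw [hq2, hcdef]
          have h2 : cβ * Real.sqrt m ≤ β t * (-⟪lam, τ' t⟫) :=
            mul_le_mul hβt hule hsqrtm.le (le_trans hcβ.le hβt)
          linarith [h2]
        have hnegLip : LipschitzOnWith Cf (fun s => -f s) (Icc α γ) := by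
          intro x hx y hy
          have := (hfLip.mono hαγIcc) hx hy
          simpa [edist_neg_neg] using this
        have hlb := lipschitz_ae_deriv_lb hαγ hcpos hnegLip hae
        simp only [hfα, hfγ, neg_zero] at hlb
        nlinarith [hlb, hαγ, hcpos]
    · -- Case A : f vanishes identically on (p,q)
      have hfzero : ∀ t ∈ Ioo p q, f t = 0 := by
        intro t ht
        have htI : t ∈ Icc (0:ℝ) L := hIccsub ⟨ht.1.le, ht.2.le⟩
        exact hzero t htI (fun htΩ => hmeet ⟨t, ht, htΩ⟩)
      set c0 : ℝ := (p + q) / 2 with hc0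
      set R : ℝ := (q - p) / 2 with hRdef
      have hRpos : 0 < R := by rw [hRdef]; linarith
      set bump : ContDiffBump c0 := ⟨R/4, R/2, by linarith, by linarith⟩ with hbump
      have hrOut : bump.rOut = R / 2 := rfl
      have hclosedball : Metric.closedBall c0 (R/2) ⊆ Ioo p q := by
        intro y hy
        rw [Metric.mem_closedBall, Real.dist_eq] at hy
        have h := abs_le.mp hy
        constructor
        · linarith [h.1, h.2, hc0, hRdef]
        · linarith [h.1, h.2, hc0, hRdef]
      set ξ : ℝ → E n := fun t => (bump : ℝ → ℝ) t • lam with hξ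
      have hbdiff : Differentiable ℝ (fun t => (bump : ℝ → ℝ) t) :=
        (bump.contDiff (n := 1)).differentiable one_ne_zero
      have hξc : ContDiff ℝ (⊤ : ℕ∞) ξ := bump.contDiff.smul contDiff_const
      have hsuppsub : tsupport ξ ⊆ Metric.closedBall c0 (R/2) := by
        rw [← hrOut, ← bump.tsupport_eq]
        apply closure_mono
        intro t ht
        simp only [Function.mem_support] at ht ⊢
        intro h0
        exact ht (by rw [hξ]; simp [h0])
      have hξsupp : tsupport ξ ⊆ Ioo (0:ℝ) L :=
        subset_trans hsuppsub (subset_trans hclosedball hIoosub)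
      have hint := heq1 ξ hξc hξsupp
      have hderivξ : ∀ t, deriv ξ t = deriv (fun s => (bump : ℝ → ℝ) s) t • lam :=
        fun t => deriv_smul_const (hbdiff t) lam
      have houtside : ∀ t, t ∉ Ioo p q →
          (bump : ℝ → ℝ) t = 0 ∧ deriv (fun s => (bump : ℝ → ℝ) s) t = 0 := by
        intro t ht
        have htb : t ∉ Metric.closedBall c0 (R/2) := fun hmem => ht (hclosedball hmem)
        rw [Metric.mem_closedBall, not_le] at htb
        refine ⟨bump.zero_of_le_dist (by rw [hrOut]; exact htb.le), ?_⟩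
        have hopen : IsOpen {y : ℝ | R/2 < dist y c0} := by
          have : {y : ℝ | R/2 < dist y c0} = (Metric.closedBall c0 (R/2))ᶜ := by
            ext y; simp [Metric.mem_closedBall, not_le]
          rw [this]
          exact Metric.isClosed_closedBall.isOpen_compl
        have hev : (fun s => (bump : ℝ → ℝ) s) =ᶠ[𝓝 t] fun _ => 0 := by
          filter_upwards [hopen.mem_nhds htb] with y hy
          exact bump.zero_of_le_dist (by rw [hrOut]; exact le_of_lt hy)
        rw [hev.deriv_eq, deriv_const]
      set F : ℝ → ℝ :=
        fun t => β t * (k ^ 2 * ((bump : ℝ → ℝ) t * (1 - ⟪lam, τ t⟫ ^ 2))) with hF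
      have haeq : ∀ᵐ t ∂(volume.restrict (Ioo (0:ℝ) L)),
          (f t * ⟪τ' t, deriv ξ t⟫ + f' t * ⟪τ' t, ξ t⟫ - f t * k ^ 2 * ⟪τ t, ξ t⟫
            + β t * k ^ 2 * ⟪projPerp (τ t) (τ' t) lam, ξ t⟫) = F t := by
        filter_upwards [hτae, hfae, heq2, ae_restrict_mem measurableSet_Ioo]
          with t hτd' hfd' hq2 htIoo
        by_cases htpq : t ∈ Ioo p q
        · have htI : t ∈ Icc (0:ℝ) L := Ioo_subset_Icc_self htIoo
          have hft : f t = 0 := hfzero t htpq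
          have hf't : f' t = 0 := by
            have hev : f =ᶠ[𝓝 t] fun _ => 0 := by
              filter_upwards [isOpen_Ioo.mem_nhds htpq] with y hy
              exact hfzero y hy
            exact hfd'.unique ((hasDerivAt_const t (0:ℝ)).congr_of_eventuallyEq hev)
          have hut : ⟪lam, τ' t⟫ = 0 := by
            have hβne : β t ≠ 0 := (hβpos t htI).ne'
            have h0 : β t * ⟪lam, τ' t⟫ = 0 := by rw [← hq2, hf't]
            rcases mul_eq_zero.mp h0 with hcase | hcase
            · exact absurd hcase hβne
            · exact hcase
          have horth_t : ⟪τ t, τ' t⟫ = 0 := by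
            have h1 : HasDerivAt (fun s => ⟪τ s, τ s⟫) (⟪τ t, τ' t⟫ + ⟪τ' t, τ t⟫) t :=
              hτd'.inner ℝ hτd'
            have hev : (fun s => ⟪τ s, τ s⟫) =ᶠ[𝓝 t] fun _ => (1:ℝ) := by
              filter_upwards [isOpen_Ioo.mem_nhds htIoo] with y hy
              rw [real_inner_self_eq_norm_sq, hτnorm y (Ioo_subset_Icc_self hy), one_pow]
            have h0 : HasDerivAt (fun s => ⟪τ s, τ s⟫) 0 t :=
              (hasDerivAt_const t (1:ℝ)).congr_of_eventuallyEq hev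
            have h3 := h1.unique h0
            rw [real_inner_comm (τ' t) (τ t)] at h3
            rw [real_inner_comm]
            linarith
          have hproj : projPerp (τ t) (τ' t) lam = lam - ⟪lam, τ t⟫ • τ t :=
            projPerp_eq (hτnorm t htI) horth_t hut
          have hinner : ⟪projPerp (τ t) (τ' t) lam, ξ t⟫
              = (bump : ℝ → ℝ) t * (1 - ⟪lam, τ t⟫ ^ 2) := by
            rw [hproj, hξ]
            simp only [inner_smul_right, inner_sub_left, inner_smul_left, RCLike.conj_to_real]
            have h1 : ⟪lam, lam⟫ = (1:ℝ) := by
              rw [real_inner_self_eq_norm_sq, hlam]; norm_num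
            rw [h1, real_inner_comm (τ t) lam]
            ring
          rw [hft, hf't, hinner]
          simp only [hF]
          ring
        · have hb0 := houtside t htpq
          have hξ0 : ξ t = 0 := by rw [hξ]; simp [hb0.1]
          have hdξ0 : deriv ξ t = 0 := by rw [hderivξ t, hb0.2, zero_smul]
          rw [hξ0, hdξ0]
          simp [hF, hb0.1]
      have hF0 : ∫ t in Ioo (0:ℝ) L, F t = 0 := by
        rw [← integral_congr_ae haeq]
        exact hint
      obtain ⟨P1, P2, hP1, hP2, hβeq⟩ :=
        hβBV.locallyBoundedVariationOn.exists_monotoneOn_sub_monotoneOn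
      have hβaem : AEMeasurable β (volume.restrict (Ioo (0:ℝ) L)) := by
        have h1 : AEMeasurable P1 (volume.restrict (Icc (0:ℝ) L)) :=
          aemeasurable_restrict_of_monotoneOn measurableSet_Icc hP1
        have h2 : AEMeasurable P2 (volume.restrict (Icc (0:ℝ) L)) :=
          aemeasurable_restrict_of_monotoneOn measurableSet_Icc hP2
        have h3 : AEMeasurable β (volume.restrict (Icc (0:ℝ) L)) := by
          rw [hβeq]; exact h1.sub h2
        exact h3.mono_measure (Measure.restrict_mono Ioo_subset_Icc_self le_rfl)
      set Mβ : ℝ := |β 0| + (eVariationOn β (Icc 0 L)).toReal with hMβ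
      have hβbd : ∀ t ∈ Icc (0:ℝ) L, |β t| ≤ Mβ := by
        intro t ht
        have h0I : (0:ℝ) ∈ Icc (0:ℝ) L := ⟨le_refl _, hL.le⟩
        have hd := hβBV.dist_le ht h0I
        rw [Real.dist_eq] at hd
        have habs := abs_sub_abs_le_abs_sub (β t) (β 0)
        rw [hMβ]
        linarith
      have hacont' : ContinuousOn (fun t => ⟪lam, τ t⟫) (Ioo (0:ℝ) L) :=
        hacont.mono Ioo_subset_Icc_self
      have hvolIoo : volume (Ioo (0:ℝ) L) < ⊤ := by
        rw [Real.volume_Ioo]; exact ENNReal.ofReal_lt_top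
      have hrest_cont : ContinuousOn
          (fun t => k ^ 2 * ((bump : ℝ → ℝ) t * (1 - ⟪lam, τ t⟫ ^ 2))) (Ioo (0:ℝ) L) :=
        continuousOn_const.mul (bump.continuous.continuousOn.mul
          (continuousOn_const.sub (hacont'.pow 2)))
      have hFaesm : AEStronglyMeasurable F (volume.restrict (Ioo (0:ℝ) L)) := by
        rw [hF]
        exact (hβaem.mul (hrest_cont.aemeasurable measurableSet_Ioo)).aestronglyMeasurable
      have hconst_int : Integrable (fun _ : ℝ => Mβ * (k ^ 2 * 2))
          (volume.restrict (Ioo (0:ℝ) L)) :=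
        integrableOn_const hvolIoo.ne
      have hFint : Integrable F (volume.restrict (Ioo (0:ℝ) L)) := by
        apply Integrable.mono' hconst_int hFaesm
        filter_upwards [ae_restrict_mem measurableSet_Ioo] with t ht
        have htI : t ∈ Icc (0:ℝ) L := Ioo_subset_Icc_self ht
        have h1 := hβbd t htI
        have h2 : |⟪lam, τ t⟫| ≤ 1 := by
          have hcs := abs_real_inner_le_norm lam (τ t)
          rw [hlam, hτnorm t htI] at hcs
          simpa using hcs
        have h3 : (0:ℝ) ≤ (bump : ℝ → ℝ) t := bump.nonneg
        have h4 : (bump : ℝ → ℝ) t ≤ 1 := bump.le_one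
        simp only [hF]
        rw [Real.norm_eq_abs, abs_mul]
        have h5 : |k ^ 2 * ((bump : ℝ → ℝ) t * (1 - ⟪lam, τ t⟫ ^ 2))| ≤ k ^ 2 * 2 := by
          rw [abs_mul, abs_of_nonneg (sq_nonneg k)]
          apply mul_le_mul_of_nonneg_left _ (sq_nonneg k)
          rw [abs_mul]
          have h6 : |1 - ⟪lam, τ t⟫ ^ 2| ≤ 2 := by
            rw [abs_le]
            constructor <;> nlinarith [sq_nonneg (⟪lam, τ t⟫), abs_le.mp h2]
          have h7 : |(bump : ℝ → ℝ) t| ≤ 1 := by rw [abs_of_nonneg h3]; exact h4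
          nlinarith [abs_nonneg (1 - ⟪lam, τ t⟫ ^ 2), abs_nonneg ((bump : ℝ → ℝ) t), h6, h7]
        exact mul_le_mul h1 h5 (abs_nonneg _) (le_trans (abs_nonneg _) h1)
      set G : ℝ → ℝ := fun t => (cβ * (k ^ 2 * mδ)) * (bump : ℝ → ℝ) t with hG
      have hGint : Integrable G (volume.restrict (Ioo (0:ℝ) L)) := by
        apply Integrable.mono'
          (integrableOn_const hvolIoo.ne :
            IntegrableOn (fun _ : ℝ => cβ * (k ^ 2 * mδ)) _ _)
          ((continuous_const.mul bump.continuous).aestronglyMeasurable)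
        filter_upwards with t
        have h3 : (0:ℝ) ≤ (bump : ℝ → ℝ) t := bump.nonneg
        have h4 : (bump : ℝ → ℝ) t ≤ 1 := bump.le_one
        show ‖cβ * (k ^ 2 * mδ) * (bump : ℝ → ℝ) t‖ ≤ cβ * (k ^ 2 * mδ)
        rw [Real.norm_eq_abs, abs_of_nonneg (mul_nonneg (by positivity) h3)]
        nlinarith [hcβ, hmδpos, sq_nonneg k, mul_nonneg (mul_nonneg hcβ.le hmδpos.le) (sq_nonneg k)]
      have hGF : G ≤ᵐ[volume.restrict (Ioo (0:ℝ) L)] F := by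
        filter_upwards [ae_restrict_mem measurableSet_Ioo] with t ht
        by_cases hb : (bump : ℝ → ℝ) t = 0
        · simp [hG, hF, hb]
        · have htball : t ∈ Metric.ball c0 (R/2) := by
            rw [← hrOut, ← bump.support_eq]
            exact hb
          have htpq : t ∈ Ioo p q := hclosedball (Metric.ball_subset_closedBall htball)
          have htIcc : t ∈ Icc p q := ⟨htpq.1.le, htpq.2.le⟩
          have htI : t ∈ Icc (0:ℝ) L := hIccsub htIcc
          have habs := hbound t htIcc
          have hsq : ⟪lam, τ t⟫ ^ 2 ≤ (1 - δ) ^ 2 :=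
            sq_le_sq' (abs_le.mp habs).1 (abs_le.mp habs).2
          have h1 : mδ ≤ 1 - ⟪lam, τ t⟫ ^ 2 := by rw [hmδeq]; linarith
          have hβt := hβlb t htI
          have h3 : (0:ℝ) ≤ (bump : ℝ → ℝ) t := bump.nonneg
          have hk2 : (0:ℝ) < k ^ 2 := by positivity
          simp only [hG, hF]
          have h5 : cβ * mδ ≤ β t * (1 - ⟪lam, τ t⟫ ^ 2) :=
            mul_le_mul hβt h1 hmδpos.le (le_trans hcβ.le hβt)
          have h6 := mul_le_mul_of_nonneg_right h5 (mul_nonneg hk2.le h3)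
          calc cβ * (k ^ 2 * mδ) * (bump : ℝ → ℝ) t
              = (cβ * mδ) * (k ^ 2 * (bump : ℝ → ℝ) t) := by ring
            _ ≤ (β t * (1 - ⟪lam, τ t⟫ ^ 2)) * (k ^ 2 * (bump : ℝ → ℝ) t) := h6
            _ = β t * (k ^ 2 * ((bump : ℝ → ℝ) t * (1 - ⟪lam, τ t⟫ ^ 2))) := by ring
      have hGle := integral_mono_ae hGint hFint hGF
      have hbump_int : IntegrableOn (fun t => (bump : ℝ → ℝ) t) (Ioo (0:ℝ) L) volume := by
        apply Integrable.mono'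
          (integrableOn_const hvolIoo.ne : IntegrableOn (fun _ : ℝ => (1:ℝ)) _ _)
          bump.continuous.aestronglyMeasurable
        filter_upwards with t
        rw [Real.norm_eq_abs, abs_of_nonneg bump.nonneg]
        exact bump.le_one
      have hGpos : 0 < ∫ t in Ioo (0:ℝ) L, G t := by
        simp only [hG]
        rw [integral_const_mul]
        apply mul_pos (by positivity)
        rw [setIntegral_pos_iff_support_of_nonneg_ae
          (Filter.Eventually.of_forall (fun t => bump.nonneg)) hbump_int]
        have hsupp : Function.support (fun t => (bump : ℝ → ℝ) t) ∩ Ioo (0:ℝ) L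
            = Metric.ball c0 (R/2) := by
          rw [show Function.support (fun t => (bump : ℝ → ℝ) t) = Metric.ball c0 (R/2) from
            by rw [← hrOut]; exact bump.support_eq]
          apply inter_eq_left.mpr
          exact subset_trans (Metric.ball_subset_closedBall)
            (subset_trans hclosedball hIoosub)
        rw [hsupp]
        exact Metric.measure_ball_pos volume c0 (by linarith)
      linarith [hGpos, hGle, hF0]
  rcases lt_or_gt_of_ne hne with h | h
  · apply core s t0 hsI ht0I h hfs0 hft00
    intro t ht
    apply hε0p t (Icc_subset_Icc hsI.1 ht0I.2 ht)
    have h1 : t0 - s ≤ |s - t0| := by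
      rw [abs_sub_comm, abs_of_nonneg (by linarith)]
    have h2 : |t - t0| = t0 - t := by
      rw [abs_of_nonpos (by linarith [ht.2])]; ring
    rw [h2]; linarith [ht.1, hdist, h1]
  · apply core t0 s ht0I hsI h hft00 hfs0
    intro t ht
    apply hε0p t (Icc_subset_Icc ht0I.1 hsI.2 ht)
    have h1 : s - t0 ≤ |s - t0| := le_abs_self _
    have h2 : |t - t0| = t - t0 := abs_of_nonneg (by linarith [ht.1])
    rw [h2]; linarith [ht.2, hdist, h1]
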